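/- Let 𝔟 ∈ {0, ℝB}, let 𝔠 be a complex subspace of E, let 𝔯 be a totally real subspace of E orthogonal to 𝔠, and let 𝔷 ∈ {0, ℝZ} with 𝔷 = ℝZ whenever 𝔠 ≠ 0; set 𝔥 = 𝔟 ⊕ 𝔠 ⊕ 𝔯 ⊕ 𝔷 ⊆ 𝔰. Then for every g ∈ G there exist X ∈ 𝔥 and Y ∈ 𝔰 ⊖ 𝔥 (the orthogonal complement of 𝔥 in 𝔰) such that g = Exp(X)·Exp(Y). -/

import Mathlib

open scoped RealInnerProductSpace

noncomputable section

namespace CHn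

/-- `E n` is `ℂ^{n-1}`, viewed as a real inner product space with `⟪U,V⟫ = Re⟪U,V⟫_ℂ`
and complex structure `JU = iU`. -/
abbrev E (n : ℕ) := EuclideanSpace ℂ (Fin (n - 1))

/-- The solvable part `𝔰 = 𝔞 ⊕ 𝔫` of the Iwasawa decomposition of `𝔰𝔲(1,n)`, modeled as
`ℝB ⊕ E ⊕ ℝZ`; the element `(a, U, x)` represents `aB + U + xZ`. -/
abbrev S (n : ℕ) := ℝ × E n × ℝ

variable (n : ℕ)

/-- The vector `B`. -/
def B : S n := (1, 0, 0)

/-- The vector `Z`. -/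
def Z : S n := (0, 0, 1)

/-- The inner product of `𝔰` (`B`, `Z` unit, orthogonal direct sum `ℝB ⊕ E ⊕ ℝZ`). -/
def sInner (X Y : S n) : ℝ := X.1 * Y.1 + ⟪X.2.1, Y.2.1⟫ + X.2.2 * Y.2.2

/-- The ambient complex structure on `𝔰`: `J(aB + U + xZ) = -xB + JU + aZ`. -/
def Js : S n →ₗ[ℝ] S n where
  toFun X := (-X.2.2, Complex.I • X.2.1, X.1)
  map_add' X Y := by
    refine Prod.ext ?_ (Prod.ext ?_ ?_)
    · simp; ring
    · simp [smul_add]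
    · simp
  map_smul' c X := by
    refine Prod.ext ?_ (Prod.ext ?_ ?_)
    · simp only [Prod.smul_fst, Prod.smul_snd, smul_eq_mul, RingHom.id_apply]; ring
    · simp [Prod.smul_fst, Prod.smul_snd, smul_comm c Complex.I]
    · simp

/-- The Lie bracket of `𝔰`:
`[aB + U + xZ, bB + V + yZ] = (1/2)(aV - bU) + (ay - bx + ⟪JU, V⟫)Z`. -/
def bra (X Y : S n) : S n :=
  (0, (2⁻¹ : ℝ) • (X.1 • Y.2.1 - Y.1 • X.2.1),
    X.1 * Y.2.2 - Y.1 * X.2.2 + ⟪Complex.I • X.2.1, Y.2.1⟫)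

/-- `ad(X) = [X, ·]`, a (continuous) linear endomorphism of `𝔰`. -/
def ad (X : S n) : S n →L[ℝ] S n :=
  LinearMap.toContinuousLinearMap
    { toFun := bra n X
      map_add' := fun Y Y' => by
        unfold bra
        refine Prod.ext ?_ (Prod.ext ?_ ?_)
        · simp
        · simp only [Prod.fst_add, Prod.snd_add]
          module
        · simp only [Prod.fst_add, Prod.snd_add, inner_add_right]
          ring
      map_smul' := fun c Y => by
        unfold bra
        have h : ⟪Complex.I • X.2.1, c • Y.2.1⟫ = c * ⟪Complex.I • X.2.1, Y.2.1⟫ :=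
          real_inner_smul_right _ _ _
        refine Prod.ext ?_ (Prod.ext ?_ ?_)
        · simp
        · simp only [Prod.smul_fst, Prod.smul_snd, smul_eq_mul, RingHom.id_apply]
          module
        · simp only [Prod.smul_fst, Prod.smul_snd, smul_eq_mul, h, RingHom.id_apply]
          ring }

/-- `exp(ad(X)) = Σ_{k ≥ 0} ad(X)^k / k!`. -/
def expAd (X : S n) : S n →L[ℝ] S n := NormedSpace.exp (ad n X)

/-- `ρ(t) = (e^t - 1)/t` for `t ≠ 0`, `ρ(0) = 1`. -/
def rho (t : ℝ) : ℝ := if t = 0 then 1 else (Real.exp t - 1) / t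

/-- The Iwasawa group `AN`, modeled as `G = ℝ × E × ℝ`. -/
abbrev G (n : ℕ) := ℝ × E n × ℝ

/-- The product of `G`:
`(a,P,p)·(b,Q,q) = (a+b, P + e^{a/2}Q, p + e^a q + (1/2)e^{a/2}⟪JP,Q⟫)`. -/
def gmul (g h : G n) : G n :=
  (g.1 + h.1, g.2.1 + Real.exp (g.1 / 2) • h.2.1,
    g.2.2 + Real.exp g.1 * h.2.2 + 2⁻¹ * Real.exp (g.1 / 2) * ⟪Complex.I • g.2.1, h.2.1⟫)

/-- The Lie exponential `Exp : 𝔰 → G`, `Exp(cB + W + zZ) = (c, ρ(c/2)W, ρ(c)z)`. -/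
def Exp (X : S n) : G n := (X.1, rho (X.1 / 2) • X.2.1, rho X.1 * X.2.2)

/-- The inclusion of `E` into `𝔰`. -/
def inE : E n →ₗ[ℝ] S n where
  toFun U := (0, U, 0)
  map_add' U V := by refine Prod.ext ?_ (Prod.ext ?_ ?_) <;> simp
  map_smul' c U := by refine Prod.ext ?_ (Prod.ext ?_ ?_) <;> simp

/-- A real subspace of `E` is totally real if `⟪Ju, v⟫ = 0` for all its elements. -/
def TotallyRealE (V : Submodule ℝ (E n)) : Prop :=
  ∀ u ∈ V, ∀ v ∈ V, ⟪Complex.I • u, v⟫ = 0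

/-- A real subspace of `E` is complex if it is `J`-invariant. -/
def IsComplexE (V : Submodule ℝ (E n)) : Prop :=
  ∀ u ∈ V, Complex.I • u ∈ V

/-- The maximal complex subspace `V ∩ JV` of a real subspace `V` of `E`. -/
def maxCE (V : Submodule ℝ (E n)) : Set (E n) := {w | w ∈ V ∧ Complex.I • w ∈ V}

/-- `V` is a CR subspace of `E` if the orthogonal complement in `V` of its maximal
complex subspace `V ∩ JV` is totally real. -/
def IsCRE (V : Submodule ℝ (E n)) : Prop :=
  ∀ u ∈ V, ∀ v ∈ V, (∀ w ∈ maxCE n V, ⟪u, w⟫ = 0) →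
    (∀ w ∈ maxCE n V, ⟪v, w⟫ = 0) → ⟪Complex.I • u, v⟫ = 0

/-- A subset of `𝔰` is totally real if `⟪Ju, v⟫ = 0` for all its elements. -/
def TotallyRealS (V : Set (S n)) : Prop := ∀ u ∈ V, ∀ v ∈ V, sInner n (Js n u) v = 0

/-- The maximal complex subspace `V ∩ JV` of a real subspace `V` of `𝔰`. -/
def maxCS (V : Set (S n)) : Set (S n) := {x | x ∈ V ∧ Js n x ∈ V}

/-- `V` is a CR subspace of `𝔰` if the orthogonal complement in `V` of its maximal
complex subspace `V ∩ JV` is totally real. -/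
def IsCRS (V : Set (S n)) : Prop :=
  ∀ u ∈ V, ∀ v ∈ V, (∀ w ∈ maxCS n V, sInner n u w = 0) →
    (∀ w ∈ maxCS n V, sInner n v w = 0) → sInner n (Js n u) v = 0


lemma rho_pos (t : ℝ) : 0 < rho t := by
  unfold rho
  split_ifs with h
  · norm_num
  · rcases lt_or_gt_of_ne h with ht | ht
    · exact div_pos_of_neg_of_neg (by linarith [Real.exp_lt_one_iff.mpr ht]) ht
    · exact div_pos (by linarith [Real.one_lt_exp_iff.mpr ht]) ht

lemma rho_ne_zero (t : ℝ) : rho t ≠ 0 := (rho_pos t).ne'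

lemma rho_zero : rho 0 = 1 := by simp [rho]

/-- `sInner n Y ·` as a linear functional. -/
def sInnerL (Y : S n) : S n →ₗ[ℝ] ℝ where
  toFun h := sInner n Y h
  map_add' h h' := by
    simp only [sInner, Prod.fst_add, Prod.snd_add, inner_add_right]; ring
  map_smul' c h := by
    simp only [sInner, Prod.smul_fst, Prod.smul_snd, smul_eq_mul, RingHom.id_apply,
      real_inner_smul_right]
    ring

lemma orth_sup {𝔟 𝔷 : Submodule ℝ (S n)} {𝔠 𝔯 : Submodule ℝ (E n)} {Y : S n}
    (h1 : ∀ h ∈ 𝔟, sInner n Y h = 0)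
    (h2 : ∀ v ∈ 𝔠, ⟪Y.2.1, v⟫ = 0)
    (h3 : ∀ v ∈ 𝔯, ⟪Y.2.1, v⟫ = 0)
    (h4 : ∀ h ∈ 𝔷, sInner n Y h = 0) :
    ∀ h ∈ 𝔟 ⊔ Submodule.map (inE n) 𝔠 ⊔ Submodule.map (inE n) 𝔯 ⊔ 𝔷,
      sInner n Y h = 0 := by
  have key : 𝔟 ⊔ Submodule.map (inE n) 𝔠 ⊔ Submodule.map (inE n) 𝔯 ⊔ 𝔷 ≤
      LinearMap.ker (sInnerL n Y) := by
    refine sup_le (sup_le (sup_le ?_ ?_) ?_) ?_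
    · intro w hw; exact h1 w hw
    · rintro w ⟨v, hv, rfl⟩
      have : sInner n Y (inE n v) = ⟪Y.2.1, v⟫ := by
        simp [sInner, inE]
      simpa [LinearMap.mem_ker, sInnerL, this] using h2 v hv
    · rintro w ⟨v, hv, rfl⟩
      have : sInner n Y (inE n v) = ⟪Y.2.1, v⟫ := by
        simp [sInner, inE]
      simpa [LinearMap.mem_ker, sInnerL, this] using h3 v hv
    · intro w hw; exact h4 w hw
  intro h hh
  exact key hh

lemma orth_spanB {Y : S n} (h : Y.1 = 0) :
    ∀ h' ∈ Submodule.span ℝ {B n}, sInner n Y h' = 0 := by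
  intro h' hh'
  obtain ⟨t, rfl⟩ := Submodule.mem_span_singleton.mp hh'
  simp [sInner, B, h]

lemma orth_spanZ {Y : S n} (h : Y.2.2 = 0) :
    ∀ h' ∈ Submodule.span ℝ {Z n}, sInner n Y h' = 0 := by
  intro h' hh'
  obtain ⟨t, rfl⟩ := Submodule.mem_span_singleton.mp hh'
  simp [sInner, Z, h]

lemma orth_bot {Y : S n} :
    ∀ h' ∈ (⊥ : Submodule ℝ (S n)), sInner n Y h' = 0 := by
  intro h' hh'
  rw [Submodule.mem_bot] at hh'
  subst hh'
  simp [sInner, Prod.fst_zero, Prod.snd_zero]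

lemma mem_sup4 {𝔟 𝔷 : Submodule ℝ (S n)} {𝔠 𝔯 : Submodule ℝ (E n)}
    {c z : ℝ} {W : E n} (hc : ((c, 0, 0) : S n) ∈ 𝔟) (hW : W ∈ 𝔠 ⊔ 𝔯)
    (hz : ((0, 0, z) : S n) ∈ 𝔷) :
    ((c, W, z) : S n) ∈ 𝔟 ⊔ Submodule.map (inE n) 𝔠 ⊔ Submodule.map (inE n) 𝔯 ⊔ 𝔷 := by
  have hWm : inE n W ∈ Submodule.map (inE n) 𝔠 ⊔ Submodule.map (inE n) 𝔯 := by
    rw [← Submodule.map_sup]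
    exact Submodule.mem_map_of_mem hW
  have l1 : 𝔟 ≤ 𝔟 ⊔ Submodule.map (inE n) 𝔠 ⊔ Submodule.map (inE n) 𝔯 ⊔ 𝔷 :=
    le_sup_of_le_left (le_sup_of_le_left le_sup_left)
  have l2 : Submodule.map (inE n) 𝔠 ⊔ Submodule.map (inE n) 𝔯 ≤
      𝔟 ⊔ Submodule.map (inE n) 𝔠 ⊔ Submodule.map (inE n) 𝔯 ⊔ 𝔷 :=
    le_sup_of_le_left (sup_le_sup_right le_sup_right _)
  have l3 : 𝔷 ≤ 𝔟 ⊔ Submodule.map (inE n) 𝔠 ⊔ Submodule.map (inE n) 𝔯 ⊔ 𝔷 := le_sup_right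
  have hrw : ((c, W, z) : S n) = ((c, 0, 0) : S n) + inE n W + ((0, 0, z) : S n) := by
    refine Prod.ext ?_ (Prod.ext ?_ ?_) <;> simp [inE]
  rw [hrw]
  exact add_mem (add_mem (l1 hc) (l2 hWm)) (l3 hz)

lemma orthE {K : Submodule ℝ (E n)} {U₂ : E n} (hU₂ : U₂ ∈ Kᗮ) (s : ℝ) :
    ∀ v ∈ K, ⟪s • U₂, v⟫ = 0 := fun v hv => by
  rw [real_inner_smul_left, (Submodule.mem_orthogonal' K U₂).mp hU₂ v hv, mul_zero]

lemma memB_span (c : ℝ) : ((c, 0, 0) : S n) ∈ Submodule.span ℝ {B n} :=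
  Submodule.mem_span_singleton.mpr ⟨c, by refine Prod.ext ?_ (Prod.ext ?_ ?_) <;> simp [B]⟩

lemma memZ_span (z : ℝ) : ((0, 0, z) : S n) ∈ Submodule.span ℝ {Z n} :=
  Submodule.mem_span_singleton.mpr ⟨z, by refine Prod.ext ?_ (Prod.ext ?_ ?_) <;> simp [Z]⟩

lemma mem0B : ((0, 0, 0) : S n) ∈ (⊥ : Submodule ℝ (S n)) := by
  rw [Submodule.mem_bot]; rfl

/-- for `𝔥 = 𝔟 ⊕ 𝔠 ⊕ 𝔯 ⊕ 𝔷` as indicated, every `g ∈ G` can be written as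
`g = Exp(X)·Exp(Y)` with `X ∈ 𝔥` and `Y ∈ 𝔰 ⊖ 𝔥`. -/
theorem statement5 (n : ℕ) (hn : 2 ≤ n)
    (𝔟 𝔷 : Submodule ℝ (S n)) (𝔠 𝔯 : Submodule ℝ (E n))
    (h𝔟 : 𝔟 = ⊥ ∨ 𝔟 = Submodule.span ℝ {B n})
    (h𝔠 : IsComplexE n 𝔠)
    (h𝔯 : TotallyRealE n 𝔯)
    (h𝔯𝔠 : ∀ u ∈ 𝔯, ∀ v ∈ 𝔠, ⟪u, v⟫ = 0)
    (h𝔷 : 𝔷 = ⊥ ∨ 𝔷 = Submodule.span ℝ {Z n})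
    (h𝔠𝔷 : 𝔠 ≠ ⊥ → 𝔷 = Submodule.span ℝ {Z n}) :
    ∀ g : G n,
      ∃ X ∈ 𝔟 ⊔ Submodule.map (inE n) 𝔠 ⊔ Submodule.map (inE n) 𝔯 ⊔ 𝔷,
      ∃ Y : S n,
        (∀ h ∈ 𝔟 ⊔ Submodule.map (inE n) 𝔠 ⊔ Submodule.map (inE n) 𝔯 ⊔ 𝔷,
          sInner n Y h = 0) ∧
        g = gmul n (Exp n X) (Exp n Y) := by
  clear hn h𝔠 h𝔯 h𝔯𝔠 h𝔠𝔷
  rintro ⟨a, U, x⟩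
  set K : Submodule ℝ (E n) := 𝔠 ⊔ 𝔯 with hK
  set U₁ : E n := (K.orthogonalProjectionOnto U : E n) with hU1def
  set U₂ : E n := U - U₁ with hU2def
  have hU₁ : U₁ ∈ K := SetLike.coe_mem _
  have hU₂ : U₂ ∈ Kᗮ := K.sub_starProjection_mem_orthogonal U
  have hUsum : U₁ + U₂ = U := by rw [hU2def]; abel
  set cI : ℝ := ⟪Complex.I • U₁, U₂⟫ with hcI
  have hρa : rho a ≠ 0 := rho_ne_zero a
  have hρh : rho (a / 2) ≠ 0 := rho_ne_zero (a / 2)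
  have hea : Real.exp a ≠ 0 := Real.exp_ne_zero a
  have heh : Real.exp (a / 2) ≠ 0 := Real.exp_ne_zero (a / 2)
  have e1 : rho (a / 2) • ((rho (a / 2))⁻¹ • U₁) = U₁ := by
    rw [smul_smul, mul_inv_cancel₀ hρh, one_smul]
  have e2 : Real.exp (a / 2) • ((Real.exp (a / 2))⁻¹ • U₂) = U₂ := by
    rw [smul_smul, mul_inv_cancel₀ heh, one_smul]
  have e2' : rho (a / 2) • ((rho (a / 2))⁻¹ • U₂) = U₂ := by
    rw [smul_smul, mul_inv_cancel₀ hρh, one_smul]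
  rcases h𝔟 with hb | hb <;> rcases h𝔷 with hz | hz
  · -- 𝔟 = ⊥, 𝔷 = ⊥
    subst hb hz
    refine ⟨(0, U₁, 0), mem_sup4 n (mem0B n) hU₁ (mem0B n),
      (a, (rho (a / 2))⁻¹ • U₂, (rho a)⁻¹ * (x - 2⁻¹ * cI)), ?_, ?_⟩
    · exact orth_sup n (orth_bot n)
        (fun v hv => orthE n hU₂ _ v ((le_sup_left : 𝔠 ≤ K) hv))
        (fun v hv => orthE n hU₂ _ v ((le_sup_right : 𝔯 ≤ K) hv))
        (orth_bot n)
    · simp only [gmul, Exp, zero_div, rho_zero, Real.exp_zero, one_smul, one_mul,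
        mul_zero, mul_one, zero_add, add_zero, e1, e2, e2']
      refine Prod.ext ?_ (Prod.ext ?_ ?_)
      · simp
      · exact hUsum.symm
      · rw [← hcI]
        field_simp
        ring
  · -- 𝔟 = ⊥, 𝔷 = span Z
    subst hb hz
    refine ⟨(0, U₁, x - 2⁻¹ * cI), mem_sup4 n (mem0B n) hU₁ (memZ_span n _),
      (a, (rho (a / 2))⁻¹ • U₂, 0), ?_, ?_⟩
    · exact orth_sup n (orth_bot n)
        (fun v hv => orthE n hU₂ _ v ((le_sup_left : 𝔠 ≤ K) hv))
        (fun v hv => orthE n hU₂ _ v ((le_sup_right : 𝔯 ≤ K) hv))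
        (orth_spanZ n rfl)
    · simp only [gmul, Exp, zero_div, rho_zero, Real.exp_zero, one_smul, one_mul,
        mul_zero, mul_one, zero_add, add_zero, e1, e2, e2']
      refine Prod.ext ?_ (Prod.ext ?_ ?_)
      · simp
      · exact hUsum.symm
      · rw [← hcI]
        ring
  · -- 𝔟 = span B, 𝔷 = ⊥
    subst hb hz
    refine ⟨(a, (rho (a / 2))⁻¹ • U₁, 0), mem_sup4 n (memB_span n a)
      (K.smul_mem _ hU₁) (mem0B n),
      (0, (Real.exp (a / 2))⁻¹ • U₂, (Real.exp a)⁻¹ * (x - 2⁻¹ * cI)), ?_, ?_⟩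
    · exact orth_sup n (orth_spanB n rfl)
        (fun v hv => orthE n hU₂ _ v ((le_sup_left : 𝔠 ≤ K) hv))
        (fun v hv => orthE n hU₂ _ v ((le_sup_right : 𝔯 ≤ K) hv))
        (orth_bot n)
    · simp only [gmul, Exp, zero_div, rho_zero, Real.exp_zero, one_smul, one_mul,
        mul_zero, mul_one, zero_add, add_zero, e1, e2]
      refine Prod.ext ?_ (Prod.ext ?_ ?_)
      · simp
      · exact hUsum.symm
      · rw [real_inner_smul_right, ← hcI]
        field_simp
        ring
  · -- 𝔟 = span B, 𝔷 = span Z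
    subst hb hz
    refine ⟨(a, (rho (a / 2))⁻¹ • U₁, (rho a)⁻¹ * (x - 2⁻¹ * cI)),
      mem_sup4 n (memB_span n a) (K.smul_mem _ hU₁) (memZ_span n _),
      (0, (Real.exp (a / 2))⁻¹ • U₂, 0), ?_, ?_⟩
    · exact orth_sup n (orth_spanB n rfl)
        (fun v hv => orthE n hU₂ _ v ((le_sup_left : 𝔠 ≤ K) hv))
        (fun v hv => orthE n hU₂ _ v ((le_sup_right : 𝔯 ≤ K) hv))
        (orth_spanZ n rfl)
    · simp only [gmul, Exp, zero_div, rho_zero, Real.exp_zero, one_smul, one_mul,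
        mul_zero, mul_one, zero_add, add_zero, e1, e2]
      refine Prod.ext ?_ (Prod.ext ?_ ?_)
      · simp
      · exact hUsum.symm
      · rw [real_inner_smul_right, ← hcI]
        field_simp
        ring

end CHn
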